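/- Let ω : ℤ → A be periodic with least period n. If u is a word of length k ≥ n such that every factor of u of length n is a factor of ω, then u is a factor of ω. -/
import Mathlib


def IsFactorL {A : Type*} (ω : ℤ → A) (u : List A) : Prop :=
  ∃ i : ℤ, ∀ j : Fin u.length, ω (i + j.1) = u.get j

def IsLeastPeriod {A : Type*} (ω : ℤ → A) (n : ℕ) : Prop :=
  0 < n ∧ (∀ i, ω (i + n) = ω i) ∧
    ∀ m : ℕ, 0 < m → (∀ i, ω (i + m) = ω i) → n ≤ m

lemma shift_key15 {A : Type*} (ω : ℤ → A) (n : ℕ) (hper : IsLeastPeriod ω n) (a d : ℤ)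
    (H : ∀ s : ℤ, 0 ≤ s → s < (n:ℤ) - 1 → ω (a + s) = ω (a + s + d)) :
    ∀ x, ω x = ω (x + d) := by
  obtain ⟨hn0, hp, hmin⟩ := hper
  have hP : Function.Periodic ω (n:ℤ) := fun i => hp i
  have fromPer : ∀ x y : ℤ, (n:ℤ) ∣ (y - x) → ω x = ω y := by
    intro x y ⟨m, hm⟩
    have : y = x + m * n := by linarith [hm]
    rw [this]; exact (hP.int_mul m x).symm
  set p : ℤ := a + ((n:ℤ) - 1) with hpdef
  have P : ∀ x : ℤ, ¬ ((n:ℤ) ∣ (x - p)) → ω x = ω (x + d) := by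
    intro x hx
    set s : ℤ := (x - a) % n with hs
    have hs0 : 0 ≤ s := Int.emod_nonneg _ (by exact_mod_cast hn0.ne')
    have hsn : s < n := Int.emod_lt_of_pos _ (by exact_mod_cast hn0)
    have hdiv : (n:ℤ) ∣ (x - a - s) := Int.dvd_self_sub_of_emod_eq rfl
    have hsne : s ≠ (n:ℤ) - 1 := by
      intro h
      apply hx
      have hx' : x - p = x - a - s := by rw [hpdef]; rw [h]; ring
      rw [hx']
      exact hdiv
    have hslt : s < (n:ℤ) - 1 := lt_of_le_of_ne (by omega) hsne
    have e1 : ω x = ω (a + s) := fromPer x (a + s) (by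
      have : a + s - x = -(x - a - s) := by ring
      rw [this]; exact hdiv.neg_right)
    have e2 : ω (x + d) = ω (a + s + d) := fromPer _ _ (by
      have : a + s + d - (x + d) = -(x - a - s) := by ring
      rw [this]; exact hdiv.neg_right)
    rw [e1, e2]; exact H s hs0 hslt
  have cyc : ω p = ω (p + d) := by
    have aux : ∀ k : ℕ, ω (p + d) = ω (p + ((k:ℤ)+1) * d) ∨ ω (p + d) = ω p := by
      intro k
      induction k with
      | zero => left; norm_num
      | succ k ih =>
        rcases ih with h | h
        · by_cases hd : (n:ℤ) ∣ ((k:ℤ)+1) * d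
          · right
            rw [h]
            exact (fromPer p _ (by simpa using hd)).symm
          · left
            rw [h, P (p + ((k:ℤ)+1) * d) (by simpa using hd)]
            congr 1
            push_cast
            ring
        · right; exact h
    rcases aux (n - 1) with h | h
    · have hn' : ((n-1 : ℕ) : ℤ) + 1 = (n:ℤ) := by
        have := hn0; push_cast [Nat.cast_sub (by omega : 1 ≤ n)]; ring
      rw [hn'] at h
      rw [h]
      exact fromPer _ _ ⟨d, by ring⟩
    · exact h.symm
  intro x
  by_cases hx : (n:ℤ) ∣ (x - p)
  · have e1 : ω x = ω p := fromPer x p (by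
      have : p - x = -(x - p) := by ring
      rw [this]; exact hx.neg_right)
    have e2 : ω (x + d) = ω (p + d) := fromPer _ _ (by
      have : p + d - (x + d) = -(x - p) := by ring
      rw [this]; exact hx.neg_right)
    rw [e1, e2]; exact cyc
  · exact P x hx

theorem stmt15 {A : Type*} (ω : ℤ → A) (n : ℕ) (hper : IsLeastPeriod ω n)
    (u : List A) (hlen : n ≤ u.length)
    (hfac : ∀ t : List A, t <:+: u → t.length = n → IsFactorL ω t) :
    IsFactorL ω u := by
  have hn0 : 0 < n := hper.1
  -- the length-n window at position k
  have hwin : ∀ k : ℕ, (hk : k + n ≤ u.length) →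
      ∃ j : ℤ, ∀ t : ℕ, (ht : t < n) → ω (j + t) = u.get ⟨k + t, by omega⟩ := by
    intro k hk
    have hinf : (u.drop k).take n <:+: u :=
      ⟨u.take k, (u.drop k).drop n, by
        rw [List.append_assoc, List.take_append_drop, List.take_append_drop]⟩
    have hlenw : ((u.drop k).take n).length = n := by simp; omega
    obtain ⟨j, hj⟩ := hfac _ hinf hlenw
    refine ⟨j, fun t ht => ?_⟩
    have := hj ⟨t, by omega⟩
    simpa [List.getElem_take, List.getElem_drop] using this
  obtain ⟨i₀, hi₀⟩ := hwin 0 (by omega)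
  have main : ∀ k : ℕ, (hk : k + n ≤ u.length) → ∀ t : ℕ, (ht : t < n) →
      ω (i₀ + k + t) = u.get ⟨k + t, by omega⟩ := by
    intro k
    induction k with
    | zero =>
      intro hk t ht
      simpa using hi₀ t ht
    | succ k ih =>
      intro hk t ht
      obtain ⟨j, hj⟩ := hwin (k+1) hk
      -- overlap: for s < n-1, ω (j + s) = ω (i₀ + (k+1) + s)
      have hov : ∀ s : ℤ, 0 ≤ s → s < (n:ℤ) - 1 →
          ω (j + s) = ω (j + s + (i₀ + (k+1:ℕ) - j)) := by
        intro s hs0 hs1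
        lift s to ℕ using hs0 with sn
        have hsn : sn < n - 1 := by omega
        have e1 : ω (j + (sn:ℤ)) = u.get ⟨k + 1 + sn, by omega⟩ := hj sn (by omega)
        have e2 : ω (i₀ + (k:ℕ) + ((sn:ℕ) + 1 : ℕ)) = u.get ⟨k + (sn + 1), by omega⟩ :=
          ih (by omega) (sn + 1) (by omega)
        have heq : j + (sn:ℤ) + (i₀ + ((k+1:ℕ):ℤ) - j) = i₀ + (k:ℕ) + ((sn + 1 : ℕ):ℤ) := by
          push_cast
          ring
        rw [e1, heq, e2]
        exact congrArg u.get (Fin.ext (by simp only [Fin.val_mk]; omega))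
      have hshift := shift_key15 ω n hper j (i₀ + (k+1:ℕ) - j) hov
      have hjt := hj t ht
      have heq : i₀ + ((k+1:ℕ):ℤ) + (t:ℤ) = j + (t:ℤ) + (i₀ + ((k+1:ℕ):ℤ) - j) := by ring
      rw [heq, ← hshift (j + t)]
      exact hjt
  refine ⟨i₀, fun jf => ?_⟩
  obtain ⟨m, hm⟩ := jf
  have h1 : (min m (u.length - n)) + n ≤ u.length := by omega
  have h2 : m - min m (u.length - n) < n := by omega
  have := main (min m (u.length - n)) h1 (m - min m (u.length - n)) h2
  have heq : i₀ + ((min m (u.length - n) : ℕ) : ℤ) + ((m - min m (u.length - n) : ℕ) : ℤ)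
      = i₀ + (m : ℤ) := by push_cast; omega
  rw [heq] at this
  rw [this]
  exact congrArg u.get (Fin.ext (by simp only [Fin.val_mk]; omega))
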